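/- Let k > 3 and k ≤ n ≤ 2k − 2. Then the sum of (−1)^{|E|} over all k-graphs E on [n] that are not 2-connected equals (−1)^{n−k} · binomial(n−1, k−1). (This is the Euler-characteristic consequence of the theorem that for k > 3 and n < 2k−1 the complex Δ_{n,k}^2 of not 2-connected k-graphs has the homotopy type of a wedge of binomial(n−1,k−1) spheres of dimension n−k−1.) -/

import Mathlib

open Finset

/-- The graph underlying a hypergraph on `Fin n`: two distinct vertices are adjacent
iff they lie in a common hyperedge. -/
def hyperGraphOf (n : ℕ) (E : Finset (Finset (Fin n))) : SimpleGraph (Fin n) where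
  Adj u v := u ≠ v ∧ ∃ e ∈ E, u ∈ e ∧ v ∈ e
  symm := ⟨by
    rintro u v ⟨h1, e, he, hu, hv⟩
    exact ⟨h1.symm, e, he, hv, hu⟩⟩
  loopless := ⟨fun u h => h.1 rfl⟩

lemma myAdj {n : ℕ} {E : Finset (Finset (Fin n))} {u v : Fin n} :
    (hyperGraphOf n E).Adj u v ↔ u ≠ v ∧ ∃ e ∈ E, u ∈ e ∧ v ∈ e := Iff.rfl

/-- A graph on a finite vertex type is 2-connected. -/
def IsTwoConn {V : Type} [Fintype V] (G : SimpleGraph V) : Prop :=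
  2 ≤ Fintype.card V ∧ G.Connected ∧
    ∀ v : V, (G.induce ({v}ᶜ : Set V)).Connected

-- step 1: intersection lemma
lemma myInterCard {n k : ℕ} (hk : 3 < k) (hn : n ≤ 2 * k - 2) {e f : Finset (Fin n)}
    (he : e.card = k) (hf : f.card = k) : 2 ≤ (e ∩ f).card := by
  have h1 : (e ∪ f).card ≤ n := by
    simpa using (card_le_card (subset_univ (e ∪ f)))
  have h2 := card_union_add_card_inter e f
  omega

lemma myReach {n : ℕ} {E : Finset (Finset (Fin n))} {e : Finset (Fin n)}
    (heE : e ∈ E) {u w : Fin n} (hu : u ∈ e) (hw : w ∈ e) :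
    (hyperGraphOf n E).Reachable u w := by
  by_cases h : u = w
  · subst h; exact SimpleGraph.Reachable.refl _
  · exact SimpleGraph.Adj.reachable (myAdj.mpr ⟨h, e, heE, hu, hw⟩)

lemma myReachInduce {n : ℕ} {E : Finset (Finset (Fin n))} {s : Set (Fin n)}
    {e : Finset (Fin n)} (heE : e ∈ E) {u w : s} (hu : (u : Fin n) ∈ e)
    (hw : (w : Fin n) ∈ e) :
    ((hyperGraphOf n E).induce s).Reachable u w := by
  by_cases h : u = w
  · subst h; exact SimpleGraph.Reachable.refl _
  · refine SimpleGraph.Adj.reachable ?_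
    exact myAdj.mpr ⟨fun hc => h (Subtype.ext hc), e, heE, hu, hw⟩

lemma myTwoConnOfCover {n k : ℕ} (hk : 3 < k) (hkn : k ≤ n) (hn : n ≤ 2 * k - 2)
    {E : Finset (Finset (Fin n))} (hE : ∀ e ∈ E, e.card = k)
    (hcov : ∀ v : Fin n, ∃ e ∈ E, v ∈ e) : IsTwoConn (hyperGraphOf n E) := by
  have hn2 : 2 ≤ n := by omega
  refine ⟨by simpa using hn2, ?_, ?_⟩
  · have : Nonempty (Fin n) := ⟨⟨0, by omega⟩⟩
    refine SimpleGraph.Connected.mk ?_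
    intro u v
    obtain ⟨e, heE, hu⟩ := hcov u
    obtain ⟨f, hfE, hv⟩ := hcov v
    have h2 := myInterCard hk hn (hE e heE) (hE f hfE)
    obtain ⟨w, hw⟩ : (e ∩ f).Nonempty := card_pos.mp (by omega)
    exact (myReach heE hu (mem_inter.mp hw).1).trans (myReach hfE (mem_inter.mp hw).2 hv)
  · intro x
    obtain ⟨y, hy⟩ := Fintype.exists_ne_of_one_lt_card (by simp; omega) x
    have : Nonempty ({x}ᶜ : Set (Fin n)) := ⟨⟨y, hy⟩⟩
    refine SimpleGraph.Connected.mk ?_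
    rintro ⟨u, hux⟩ ⟨v, hvx⟩
    obtain ⟨e, heE, hu⟩ := hcov u
    obtain ⟨f, hfE, hv⟩ := hcov v
    have h2 := myInterCard hk hn (hE e heE) (hE f hfE)
    have h3 : 1 ≤ ((e ∩ f).erase x).card :=
      le_trans (by omega) Finset.pred_card_le_card_erase
    obtain ⟨w, hw⟩ : ((e ∩ f).erase x).Nonempty := card_pos.mp h3
    have hwx : w ≠ x := (mem_erase.mp hw).1
    have hwef : w ∈ e ∩ f := (mem_erase.mp hw).2
    exact (myReachInduce heE (u := ⟨u, hux⟩) (w := ⟨w, hwx⟩) hu (mem_inter.mp hwef).1).trans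
      (myReachInduce hfE (u := ⟨w, hwx⟩) (w := ⟨v, hvx⟩) (mem_inter.mp hwef).2 hv)

lemma myNotTwoConn {n : ℕ} (hn2 : 2 ≤ n) {E : Finset (Finset (Fin n))} {v : Fin n}
    (hv : ∀ e ∈ E, v ∉ e) : ¬ IsTwoConn (hyperGraphOf n E) := by
  rintro ⟨-, hconn, -⟩
  obtain ⟨u, hu⟩ := Fintype.exists_ne_of_one_lt_card (by simp; omega) v
  obtain ⟨p⟩ := hconn.preconnected v u
  cases p with
  | nil => exact hu rfl
  | cons h q => exact hv _ (myAdj.mp h).2.choose_spec.1 (myAdj.mp h).2.choose_spec.2.1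

lemma myAltHead (n m : ℕ) (h : m < n) :
    ∑ j ∈ Finset.range (m+1), (-1:ℤ)^j * (n.choose j) = (-1:ℤ)^m * ((n-1).choose m) := by
  induction m with
  | zero => simp
  | succ m ih =>
    rw [Finset.sum_range_succ, ih (by omega)]
    have hn1 : n - 1 + 1 = n := by omega
    have hp : n.choose (m+1) = (n-1).choose m + (n-1).choose (m+1) := by
      conv_lhs => rw [← hn1]
      exact Nat.choose_succ_succ (n-1) m
    rw [hp]; push_cast; ring

lemma myAltTail (n m : ℕ) (h : m < n) :
    ∑ j ∈ Finset.range (n+1), (if m < j then (-1:ℤ)^(j+1) * (n.choose j) else 0)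
      = (-1:ℤ)^m * ((n-1).choose m) := by
  classical
  have h1 : ∑ j ∈ Finset.range (n+1), (if m < j then (-1:ℤ)^(j+1) * (n.choose j) else 0)
      = ∑ j ∈ Finset.Ico (m+1) (n+1), (-1:ℤ)^(j+1) * (n.choose j) := by
    rw [← Finset.sum_filter]
    congr 1
    ext j
    simp only [Finset.mem_filter, Finset.mem_range, Finset.mem_Ico]
    omega
  rw [h1, Finset.sum_Ico_eq_sub _ (by omega)]
  have h2 : ∑ j ∈ Finset.range (n+1), (-1:ℤ)^(j+1) * (n.choose j) = 0 := by
    have := Int.alternating_sum_range_choose_of_ne (n := n) (by omega)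
    calc ∑ j ∈ Finset.range (n+1), (-1:ℤ)^(j+1) * (n.choose j)
        = -∑ j ∈ Finset.range (n+1), (-1:ℤ)^j * (n.choose j) := by
          rw [← Finset.sum_neg_distrib]
          refine Finset.sum_congr rfl fun j _ => ?_
          rw [pow_succ]; ring
      _ = 0 := by rw [this]; ring
  have h3 : ∑ j ∈ Finset.range (m+1), (-1:ℤ)^(j+1) * (n.choose j)
      = -((-1:ℤ)^m * ((n-1).choose m)) := by
    rw [← myAltHead n m h, ← Finset.sum_neg_distrib]
    refine Finset.sum_congr rfl fun j _ => ?_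
    rw [pow_succ]; ring
  rw [h2, h3]; ring

open scoped Classical in
noncomputable def myF (n k : ℕ) (E : Finset (Finset (Fin n))) (T : Finset (Fin n)) : ℤ :=
  if ((∀ e ∈ E, e.card = k) ∧ T.Nonempty ∧ ∀ v ∈ T, ∀ e ∈ E, v ∉ e)
  then (-1:ℤ)^(E.card + T.card + 1) else 0

open scoped Classical in
lemma mySumOverT (n k : ℕ) (E : Finset (Finset (Fin n))) :
    ∑ T ∈ (univ : Finset (Finset (Fin n))), myF n k E T
      = if ((∀ e ∈ E, e.card = k) ∧ ∃ v : Fin n, ∀ e ∈ E, v ∉ e)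
        then (-1:ℤ)^E.card else 0 := by
  by_cases hA : ∀ e ∈ E, e.card = k
  · set M : Finset (Fin n) := univ.filter (fun v => ∀ e ∈ E, v ∉ e) with hM
    have h1 : ∑ T ∈ (univ : Finset (Finset (Fin n))), myF n k E T
        = ∑ T ∈ M.powerset.erase ∅, (-1:ℤ)^(E.card + T.card + 1) := by
      simp only [myF]
      rw [← Finset.sum_filter]
      congr 1
      ext T
      simp only [Finset.mem_filter, Finset.mem_univ, true_and, Finset.mem_erase,
        Finset.mem_powerset, hA, true_and, hM, Finset.subset_iff,
        Finset.nonempty_iff_ne_empty, Finset.mem_filter]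
      tauto
    have h3 : ∑ T ∈ M.powerset.erase ∅, (-1:ℤ)^(T.card)
        = (if M = ∅ then 1 else 0) - 1 := by
      have h4 := Finset.add_sum_erase _ (fun T : Finset (Fin n) => (-1:ℤ)^T.card)
        (Finset.empty_mem_powerset M)
      rw [Finset.sum_powerset_neg_one_pow_card] at h4
      simp only [Finset.card_empty, pow_zero] at h4
      linarith
    have h5 : ∑ T ∈ M.powerset.erase ∅, (-1:ℤ)^(E.card + T.card + 1)
        = (-1:ℤ)^(E.card + 1) * ((if M = ∅ then 1 else 0) - 1) := by
      rw [← h3, Finset.mul_sum]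
      refine Finset.sum_congr rfl fun T _ => ?_
      rw [show E.card + T.card + 1 = (E.card + 1) + T.card by ring, pow_add]
    rw [h1, h5]
    have h6 : (∃ v : Fin n, ∀ e ∈ E, v ∉ e) ↔ M.Nonempty := by
      rw [hM]
      constructor
      · rintro ⟨v, hv⟩; exact ⟨v, Finset.mem_filter.mpr ⟨Finset.mem_univ v, hv⟩⟩
      · rintro ⟨v, hv⟩; exact ⟨v, (Finset.mem_filter.mp hv).2⟩
    by_cases hMe : M = ∅
    · rw [if_pos hMe, if_neg ?_]
      · ring
      · rintro ⟨-, hv⟩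
        exact (Finset.nonempty_iff_ne_empty.mp (h6.mp hv)) hMe
    · rw [if_neg hMe,
        if_pos ⟨hA, h6.mpr (Finset.nonempty_iff_ne_empty.mpr hMe)⟩, pow_succ]
      ring
  · rw [if_neg (by tauto)]
    refine Finset.sum_eq_zero fun T _ => ?_
    rw [myF, if_neg (by tauto)]

open scoped Classical in
lemma mySumOverE (n k : ℕ) (hk : 3 < k) (hkn : k ≤ n) (T : Finset (Fin n)) :
    ∑ E ∈ (univ : Finset (Finset (Finset (Fin n)))), myF n k E T
      = if n < k + T.card then (-1:ℤ)^(T.card + 1) else 0 := by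
  have hTn : T.card ≤ n := by simpa using Finset.card_le_card (Finset.subset_univ T)
  by_cases hT0 : T.Nonempty
  · set KT : Finset (Finset (Fin n)) :=
      univ.filter (fun e => e.card = k ∧ ∀ v ∈ T, v ∉ e) with hKT
    have h1 : ∑ E ∈ (univ : Finset (Finset (Finset (Fin n)))), myF n k E T
        = ∑ E ∈ KT.powerset, (-1:ℤ)^(E.card + T.card + 1) := by
      simp only [myF]
      rw [← Finset.sum_filter]
      congr 1
      ext E
      simp only [Finset.mem_filter, Finset.mem_univ, true_and, Finset.mem_powerset,
        hKT, Finset.subset_iff, hT0, true_and, Finset.mem_filter]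
      constructor
      · rintro ⟨h1, h2⟩
        exact fun {e} he => ⟨h1 e he, fun v hv => h2 v hv e he⟩
      · intro h
        exact ⟨fun e he => (h he).1, fun v hv e he => (h he).2 v hv⟩
    have h2 : ∑ E ∈ KT.powerset, (-1:ℤ)^(E.card + T.card + 1)
        = (-1:ℤ)^(T.card + 1) * (if KT = ∅ then 1 else 0) := by
      rw [← Finset.sum_powerset_neg_one_pow_card, Finset.mul_sum]
      refine Finset.sum_congr rfl fun E _ => ?_
      rw [show E.card + T.card + 1 = (T.card + 1) + E.card by ring, pow_add]
    have h3 : KT = ∅ ↔ n < k + T.card := by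
      constructor
      · intro hKe
        by_contra hc
        push_neg at hc
        have hck : k ≤ (Tᶜ : Finset (Fin n)).card := by
          rw [Finset.card_compl]; simp; omega
        obtain ⟨e, hes, hec⟩ := Finset.exists_subset_card_eq hck
        have : e ∈ KT := by
          rw [hKT, Finset.mem_filter]
          exact ⟨Finset.mem_univ e, hec,
            fun v hv hve => (Finset.mem_compl.mp (hes hve)) hv⟩
        rw [hKe] at this
        exact absurd this (Finset.notMem_empty e)
      · intro hc
        rw [Finset.eq_empty_iff_forall_notMem]
        intro e he
        rw [hKT, Finset.mem_filter] at he
        have hsub : e ⊆ Tᶜ := fun v hv => Finset.mem_compl.mpr (fun hvT => he.2.2 v hvT hv)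
        have := Finset.card_le_card hsub
        rw [Finset.card_compl, he.2.1] at this
        simp at this
        omega
    rw [h1, h2]
    by_cases hc : n < k + T.card
    · rw [if_pos hc, if_pos (h3.mpr hc), mul_one]
    · rw [if_neg hc, if_neg (fun h => hc (h3.mp h)), mul_zero]
  · have hTc : T.card = 0 := by
      rw [Finset.card_eq_zero]
      exact Finset.not_nonempty_iff_eq_empty.mp hT0
    rw [if_neg (by omega)]
    refine Finset.sum_eq_zero fun E _ => ?_
    rw [myF, if_neg (by tauto)]


open scoped Classical in
/-- For `k > 3` and `k ≤ n ≤ 2k-2`, the sum of `(-1)^{|E|}` over all not 2-connected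
`k`-graphs `E` on `[n]` equals `(-1)^{n-k} · C(n-1, k-1)`. -/
theorem euler_char_hypergraph_small_n (n k : ℕ) (hk : 3 < k) (hkn : k ≤ n)
    (hn : n ≤ 2 * k - 2) :
    ∑ E ∈ Finset.univ.filter
        (fun E : Finset (Finset (Fin n)) =>
          (∀ e ∈ E, e.card = k) ∧ ¬ IsTwoConn (hyperGraphOf n E)),
      (-1 : ℤ) ^ E.card = (-1 : ℤ) ^ (n - k) * (n - 1).choose (k - 1) := by
  have hpred : ∀ E ∈ (univ : Finset (Finset (Finset (Fin n)))),
      (((∀ e ∈ E, e.card = k) ∧ ¬ IsTwoConn (hyperGraphOf n E)) ↔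
        ((∀ e ∈ E, e.card = k) ∧ ∃ v : Fin n, ∀ e ∈ E, v ∉ e)) := by
    intro E _
    constructor
    · rintro ⟨h1, h2⟩
      refine ⟨h1, ?_⟩
      by_contra hc
      push_neg at hc
      exact h2 (myTwoConnOfCover hk hkn hn h1 hc)
    · rintro ⟨h1, v, hv⟩
      exact ⟨h1, myNotTwoConn (by omega) hv⟩
  rw [Finset.filter_congr hpred, Finset.sum_filter]
  calc ∑ E : Finset (Finset (Fin n)),
        (if ((∀ e ∈ E, e.card = k) ∧ ∃ v : Fin n, ∀ e ∈ E, v ∉ e)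
         then (-1:ℤ)^E.card else 0)
      = ∑ E : Finset (Finset (Fin n)), ∑ T : Finset (Fin n), myF n k E T := by
        exact Finset.sum_congr rfl fun E _ => (mySumOverT n k E).symm
    _ = ∑ T : Finset (Fin n), ∑ E : Finset (Finset (Fin n)), myF n k E T :=
        Finset.sum_comm
    _ = ∑ T : Finset (Fin n), (if n < k + T.card then (-1:ℤ)^(T.card + 1) else 0) :=
        Finset.sum_congr rfl fun T _ => mySumOverE n k hk hkn T
    _ = ∑ T ∈ (univ : Finset (Fin n)).powerset,
          (if n < k + T.card then (-1:ℤ)^(T.card + 1) else 0) := by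
        rw [Finset.powerset_univ]
    _ = ∑ j ∈ Finset.range ((univ : Finset (Fin n)).card + 1),
          (univ : Finset (Fin n)).card.choose j •
            (if n < k + j then (-1:ℤ)^(j + 1) else 0) :=
        Finset.sum_powerset_apply_card
          (fun j => if n < k + j then (-1:ℤ)^(j + 1) else 0)
    _ = ∑ j ∈ Finset.range (n + 1),
          (if n - k < j then (-1:ℤ)^(j + 1) * (n.choose j) else 0) := by
        rw [Finset.card_univ, Fintype.card_fin]
        refine Finset.sum_congr rfl fun j _ => ?_
        have : (n < k + j) ↔ (n - k < j) := by omega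
        by_cases hj : n - k < j
        · rw [if_pos (this.mpr hj), if_pos hj, nsmul_eq_mul]; ring
        · rw [if_neg (fun h => hj (this.mp h)), if_neg hj]; simp
    _ = (-1:ℤ)^(n - k) * ((n-1).choose (n - k)) := myAltTail n (n - k) (by omega)
    _ = (-1:ℤ)^(n - k) * ((n-1).choose (k - 1)) := by
        congr 1
        have h1 : n - k = (n - 1) - (k - 1) := by omega
        rw [h1]
        exact_mod_cast Nat.choose_symm (show k - 1 ≤ n - 1 by omega)
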